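/- arXiv:2112.09501 — 4 statements merged into one kernel-verified Lean document; each statement's English description precedes it below -/
import Mathlib

section
/- Let $\ell$ be a positive integer and let $G$ be a connected finite simple graph with more than $\frac{1}{2}(3^{\ell}-1)$ vertices, in which every vertex has degree at most four. Let $v$ be a vertex of $G$ of degree at most three. Then $G$ contains a path (a sequence of distinct vertices with consecutive vertices adjacent) with $\ell+1$ vertices starting at $v$, such that $v$ is an endpoint of the path. -/
private lemma pred_lemma {V : Type*} (G : SimpleGraph V) (hconn : G.Connected)
    (v : V) (d : ℕ) (u : V) (h : G.dist v u = d + 1) :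
    ∃ w, G.Adj w u ∧ G.dist v w = d := by
  obtain ⟨q, hq, hql⟩ := (hconn u v).exists_path_of_dist
  rw [SimpleGraph.dist_comm, h] at hql
  have hnil : ¬ q.Nil := by
    intro hn
    rw [SimpleGraph.Walk.nil_iff_length_eq] at hn
    omega
  refine ⟨q.getVert 1, (SimpleGraph.Walk.adj_snd (p := q) hnil).symm, ?_⟩
  have hle : G.dist v (q.getVert 1) ≤ d := by
    rw [SimpleGraph.dist_comm]
    have := SimpleGraph.dist_le q.tail
    have := q.length_tail_add_one hnil
    simp only [SimpleGraph.Walk.snd] at *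
    omega
  have hge : d + 1 ≤ G.dist v (q.getVert 1) + 1 := by
    calc d + 1 = G.dist v u := h.symm
    _ ≤ G.dist v (q.getVert 1) + G.dist (q.getVert 1) u := hconn.dist_triangle
    _ ≤ G.dist v (q.getVert 1) + 1 := by
        have : G.dist (q.getVert 1) u ≤ 1 :=
          SimpleGraph.dist_le (SimpleGraph.Walk.adj_snd (p := q) hnil).symm.toWalk
        omega
  omega

private lemma descend {V : Type*} (G : SimpleGraph V) (hconn : G.Connected)
    (v : V) : ∀ d (u : V), G.dist v u = d → ∀ k ≤ d, ∃ w, G.dist v w = k := by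
  intro d
  induction d with
  | zero => intro u h k hk; exact ⟨u, by omega⟩
  | succ n ih =>
    intro u h k hk
    rcases Nat.eq_or_lt_of_le hk with rfl | hlt
    · exact ⟨u, h⟩
    · obtain ⟨w, _, hw⟩ := pred_lemma G hconn v n u h
      exact ih w hw k (by omega)

/-- A connected finite simple graph with more than `(3^ℓ - 1)/2` vertices, all of
degree at most four, contains a path with `ℓ + 1` vertices starting at any given
vertex `v` of degree at most three. -/
theorem stmt_2 (V : Type*) [Fintype V] [DecidableEq V] (G : SimpleGraph V)
    [DecidableRel G.Adj] (ℓ : ℕ) (hℓ : 0 < ℓ)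
    (hconn : G.Connected)
    (hcard : 3 ^ ℓ - 1 < 2 * Fintype.card V)
    (hdeg : ∀ u : V, G.degree u ≤ 4)
    (v : V) (hv : G.degree v ≤ 3) :
    ∃ (w : V) (p : G.Walk v w), p.IsPath ∧ p.length = ℓ := by
  by_cases hfar : ∃ u : V, ℓ ≤ G.dist v u
  · obtain ⟨u, hu⟩ := hfar
    obtain ⟨w, hw⟩ := descend G hconn v (G.dist v u) u rfl ℓ hu
    obtain ⟨p, hp, hpl⟩ := (hconn v w).exists_path_of_dist
    exact ⟨w, p, hp, by omega⟩
  · exfalso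
    push_neg at hfar
    -- spheres
    set S : ℕ → Finset V := fun d => Finset.univ.filter (fun u => G.dist v u = d) with hS
    have hS0 : S 0 = {v} := by
      ext u
      simp only [hS, Finset.mem_filter, Finset.mem_univ, true_and, Finset.mem_singleton]
      rw [(hconn v u).dist_eq_zero_iff]
      exact eq_comm
    -- sphere recursion
    have hnb : ∀ d (w : V), w ∈ S d →
        (G.neighborFinset w ∩ S (d + 1)).card ≤ 3 := by
      intro d w hw
      simp only [hS, Finset.mem_filter] at hw
      cases d with
      | zero =>
        have hwv : w = v := ((hconn v w).dist_eq_zero_iff.mp hw.2).symm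
        subst hwv
        calc (G.neighborFinset w ∩ S 1).card ≤ (G.neighborFinset w).card :=
              Finset.card_le_card (Finset.inter_subset_left)
          _ ≤ 3 := by rw [SimpleGraph.card_neighborFinset_eq_degree]; exact hv
      | succ n =>
        show (G.neighborFinset w ∩ S (n + 2)).card ≤ 3
        obtain ⟨x, hadj, hx⟩ := pred_lemma G hconn v n w hw.2
        have hx1 : x ∈ G.neighborFinset w := by
          rw [SimpleGraph.mem_neighborFinset]; exact hadj.symm
        have hx2 : x ∉ G.neighborFinset w ∩ S (n + 2) := by
          simp only [Finset.mem_inter, hS, Finset.mem_filter, Finset.mem_univ, true_and]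
          intro h; omega
        have hsub : G.neighborFinset w ∩ S (n + 2) ⊆ G.neighborFinset w :=
          Finset.inter_subset_left
        have hss : (G.neighborFinset w ∩ S (n + 2)) ⊂ G.neighborFinset w :=
          (Finset.ssubset_iff_of_subset hsub).2 ⟨x, hx1, hx2⟩
        have h1 := Finset.card_lt_card hss
        have h2 : (G.neighborFinset w).card ≤ 4 := by
          rw [SimpleGraph.card_neighborFinset_eq_degree]; exact hdeg w
        omega
    have hcover : ∀ d, S (d + 1) ⊆ (S d).biUnion
        (fun w => G.neighborFinset w ∩ S (d + 1)) := by
      intro d u hu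
      simp only [hS, Finset.mem_filter, Finset.mem_univ, true_and] at hu
      obtain ⟨w, hadj, hw⟩ := pred_lemma G hconn v d u hu
      refine Finset.mem_biUnion.mpr ⟨w, ?_, ?_⟩
      · simp [hS, hw]
      · simp [hS, hu, hadj]
    have hscard : ∀ d, (S d).card ≤ 3 ^ d := by
      intro d
      induction d with
      | zero => simp [hS0]
      | succ n ih =>
        calc (S (n + 1)).card ≤ ((S n).biUnion
              (fun w => G.neighborFinset w ∩ S (n + 1))).card :=
              Finset.card_le_card (hcover n)
          _ ≤ ∑ w ∈ S n, (G.neighborFinset w ∩ S (n + 1)).card :=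
              Finset.card_biUnion_le
          _ ≤ ∑ _w ∈ S n, 3 := Finset.sum_le_sum (fun w hw => hnb n w hw)
          _ = 3 * (S n).card := by rw [Finset.sum_const]; ring
          _ ≤ 3 * 3 ^ n := by omega
          _ = 3 ^ (n + 1) := by ring
    have huniv : (Finset.univ : Finset V) ⊆ (Finset.range ℓ).biUnion S := by
      intro u _
      refine Finset.mem_biUnion.mpr ⟨G.dist v u, ?_, ?_⟩
      · exact Finset.mem_range.mpr (hfar u)
      · simp [hS]
    have hbound : Fintype.card V ≤ ∑ d ∈ Finset.range ℓ, 3 ^ d := by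
      calc Fintype.card V = (Finset.univ : Finset V).card := rfl
        _ ≤ ((Finset.range ℓ).biUnion S).card := Finset.card_le_card huniv
        _ ≤ ∑ d ∈ Finset.range ℓ, (S d).card := Finset.card_biUnion_le
        _ ≤ ∑ d ∈ Finset.range ℓ, 3 ^ d := Finset.sum_le_sum (fun d _ => hscard d)
    have hgeom : ∀ m, 2 * ∑ d ∈ Finset.range m, 3 ^ d + 1 = 3 ^ m := by
      intro m
      induction m with
      | zero => simp
      | succ n ihn =>
        rw [Finset.sum_range_succ, pow_succ]
        omega
    have := hgeom ℓ
    omega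
end

section
/- Let $I \subset \mathbb{R}$ be a finite subset and $\delta$ a positive real number. Then there exist a positive integer $k$, real numbers $a_1, \ldots, a_k \in (0,1]$, and $\mathbb{Q}$-linear maps $f_1, \ldots, f_k \colon \operatorname{Span}_{\mathbb{Q}}(I \cup \{1\}) \to \mathbb{Q}$ such that: (i) each $f_i$ fixes every rational number in $\operatorname{Span}_{\mathbb{Q}}(I \cup \{1\})$; (ii) $\sum_{i=1}^{k} a_i f_i(a) = a$ for every $a \in \operatorname{Span}_{\mathbb{Q}}(I \cup \{1\})$; and (iii) $|f_i(a) - a| \le \delta$ for every $a \in I$ and every $i$. -/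
open Module

lemma core {W : Type*} [AddCommGroup W] [Module ℚ W] [Module.Finite ℚ W]
    (ι : W →ₗ[ℚ] ℝ) (J : Finset W) (δ : ℝ) (hδ : 0 < δ) :
    ∃ (n : ℕ) (a : Fin (n+1) → ℝ) (g : Fin (n+1) → (W →ₗ[ℚ] ℚ)),
      (∀ i, 0 < a i ∧ a i ≤ 1) ∧ (∑ i, a i = 1) ∧
      (∀ w : W, ∑ i, a i * ((g i w : ℚ) : ℝ) = ι w) ∧
      (∀ i, ∀ w ∈ J, |((g i w : ℚ) : ℝ) - ι w| ≤ δ) := by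
  classical
  set n := finrank ℚ W with hn
  set b : Basis (Fin n) ℚ W := Module.finBasis ℚ W with hb
  set E : Fin n → ℝ := fun j => ι (b j) with hE
  set M : ℚ := ∑ w ∈ J, ∑ j, |b.repr w j| with hM
  have hM0 : (0:ℚ) ≤ M := by
    apply Finset.sum_nonneg; intro w _; apply Finset.sum_nonneg; intro j _; positivity
  have hMmem : ∀ w ∈ J, ∑ j, |b.repr w j| ≤ M := by
    intro w hw
    exact Finset.single_le_sum (f := fun w => ∑ j, |b.repr w j|)
      (fun w _ => Finset.sum_nonneg fun j _ => abs_nonneg _) hw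
  -- choose ε
  obtain ⟨ε, hε0, hεδ⟩ : ∃ ε : ℚ, (0:ℝ) < ε ∧ (ε:ℝ) < δ / (2 * ((M:ℝ) + 1)) := by
    have h : (0:ℝ) < δ / (2 * ((M:ℝ) + 1)) := by
      apply div_pos hδ; positivity
    obtain ⟨q, hq1, hq2⟩ := exists_rat_btwn h
    exact ⟨q, hq1, hq2⟩
  have hεδ' : (ε:ℝ) * (2 * ((M:ℝ) + 1)) ≤ δ := by
    rw [← le_div_iff₀ (by positivity)] at *
    exact hεδ.le
  -- choose s j
  have hsj : ∀ j : Fin n, ∃ s : ℚ, E j - (ε:ℝ) / (n+1) < s ∧ (s:ℝ) < E j := by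
    intro j
    apply exists_rat_btwn
    have : (0:ℝ) < (ε:ℝ)/(n+1) := by positivity
    linarith
  choose s hs1 hs2 using hsj
  set t : Fin n → ℝ := fun j => (E j - s j) / ε with ht
  have ht0 : ∀ j, 0 < t j := fun j => div_pos (by linarith [hs2 j]) hε0
  have ht1 : ∀ j, t j < 1 / (n+1) := by
    intro j
    rw [ht, div_lt_div_iff₀ hε0 (by positivity)]
    have h2 : (E j - (s j:ℝ)) < (ε:ℝ)/((n:ℝ)+1) := by linarith [hs1 j]
    have h3 := (lt_div_iff₀ (show (0:ℝ) < (n:ℝ)+1 by positivity)).mp h2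
    linarith
  have htsum : ∑ j, t j < 1 := by
    calc ∑ j : Fin n, t j ≤ ∑ _j : Fin n, 1/((n:ℝ)+1) :=
          Finset.sum_le_sum (fun j _ => (ht1 j).le)
      _ = n * (1/((n:ℝ)+1)) := by simp [mul_comm]
      _ < 1 := by rw [mul_one_div, div_lt_one (by positivity)]; linarith
  set a : Fin (n+1) → ℝ := Fin.cons (1 - ∑ j, t j) t with ha
  set r : Fin (n+1) → Fin n → ℚ := Fin.cons s (fun i j => if i = j then s j + ε else s j) with hr
  set g : Fin (n+1) → (W →ₗ[ℚ] ℚ) := fun i => b.constr ℚ (r i) with hg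
  have hts0 : 0 ≤ ∑ j, t j := Finset.sum_nonneg fun j _ => (ht0 j).le
  have hapos : ∀ i, 0 < a i ∧ a i ≤ 1 := by
    intro i
    induction i using Fin.cases with
    | zero => constructor <;> simp [ha] <;> linarith
    | succ i =>
        constructor
        · simpa [ha] using ht0 i
        · have h1 : t i < 1/((n:ℝ)+1) := ht1 i
          have h2 : (1:ℝ)/((n:ℝ)+1) ≤ 1 := by
            rw [div_le_one (by positivity)]; linarith
          simp only [ha, Fin.cons_succ]; linarith
  have hasum : ∑ i, a i = 1 := by
    rw [ha, Fin.sum_cons]; ring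
  have hεn : (ε:ℝ)/((n:ℝ)+1) ≤ (ε:ℝ) := by
    apply div_le_self hε0.le; linarith [Nat.cast_nonneg (α := ℝ) n]
  have hrE : ∀ i j, |((r i j : ℚ):ℝ) - E j| ≤ 2*(ε:ℝ) := by
    intro i j
    induction i using Fin.cases with
    | zero =>
        simp only [hr, Fin.cons_zero]
        rw [abs_le]
        constructor <;> [linarith [hs1 j, hεn]; linarith [hs2 j, hε0]]
    | succ i =>
        simp only [hr, Fin.cons_succ]
        by_cases hij : i = j
        · simp only [hij, if_pos rfl]
          push_cast
          rw [abs_le]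
          constructor <;> [linarith [hs1 j, hεn, hε0]; linarith [hs2 j, hε0]]
        · simp only [if_neg hij]
          rw [abs_le]
          constructor <;> [linarith [hs1 j, hεn]; linarith [hs2 j, hε0]]
  have hcol : ∀ j, ∑ i, a i * ((r i j : ℚ):ℝ) = E j := by
    intro j
    rw [Fin.sum_univ_succ]
    simp only [ha, hr, Fin.cons_zero, Fin.cons_succ]
    have : ∀ i : Fin n,
        t i * (((if i = j then s j + ε else s j : ℚ)):ℝ)
          = t i * (s j : ℝ) + (if i = j then t i * (ε:ℝ) else 0) := by
      intro i
      by_cases hij : i = j <;> simp [hij] <;> push_cast <;> ring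
    rw [Finset.sum_congr rfl (fun i _ => this i), Finset.sum_add_distrib,
      Finset.sum_ite_eq' Finset.univ j (fun i => t i * (ε:ℝ))]
    simp only [Finset.mem_univ, if_pos]
    have htj : t j * (ε:ℝ) = E j - s j := by
      rw [ht]; field_simp
    rw [← Finset.sum_mul, htj]
    ring
  have hgw : ∀ i w, ((g i w : ℚ):ℝ) = ∑ j, ((b.repr w j : ℚ):ℝ) * ((r i j : ℚ):ℝ) := by
    intro i w
    have : g i w = ∑ j, b.repr w j * r i j := by
      rw [hg, Basis.constr_apply_fintype]
      exact Finset.sum_congr rfl fun j _ => by rw [Basis.equivFun_apply, smul_eq_mul]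
    rw [this]; push_cast; ring
  have hιw : ∀ w, ι w = ∑ j, ((b.repr w j : ℚ):ℝ) * E j := by
    intro w
    conv_lhs => rw [← Basis.sum_repr b w]
    rw [map_sum]
    exact Finset.sum_congr rfl fun j _ => by
      rw [map_smul, Rat.smul_def]
  refine ⟨n, a, g, hapos, hasum, ?_, ?_⟩
  · intro w
    calc ∑ i, a i * ((g i w : ℚ):ℝ)
        = ∑ i, ∑ j, a i * (((b.repr w j : ℚ):ℝ) * ((r i j : ℚ):ℝ)) := by
          exact Finset.sum_congr rfl fun i _ => by rw [hgw, Finset.mul_sum]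
      _ = ∑ j, ((b.repr w j : ℚ):ℝ) * ∑ i, a i * ((r i j : ℚ):ℝ) := by
          rw [Finset.sum_comm]
          exact Finset.sum_congr rfl fun j _ => by
            rw [Finset.mul_sum]
            exact Finset.sum_congr rfl fun i _ => by ring
      _ = ∑ j, ((b.repr w j : ℚ):ℝ) * E j := by
          exact Finset.sum_congr rfl fun j _ => by rw [hcol]
      _ = ι w := (hιw w).symm
  · intro i w hw
    have hdiff : ((g i w : ℚ):ℝ) - ι w
        = ∑ j, ((b.repr w j : ℚ):ℝ) * (((r i j : ℚ):ℝ) - E j) := by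
      rw [hgw, hιw, ← Finset.sum_sub_distrib]
      exact Finset.sum_congr rfl fun j _ => by ring
    rw [hdiff]
    calc |∑ j, ((b.repr w j : ℚ):ℝ) * (((r i j : ℚ):ℝ) - E j)|
        ≤ ∑ j, |((b.repr w j : ℚ):ℝ) * (((r i j : ℚ):ℝ) - E j)| :=
          Finset.abs_sum_le_sum_abs _ _
      _ ≤ ∑ j, |((b.repr w j : ℚ):ℝ)| * (2*(ε:ℝ)) := by
          apply Finset.sum_le_sum
          intro j _
          rw [abs_mul]
          exact mul_le_mul_of_nonneg_left (hrE i j) (abs_nonneg _)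
      _ = (∑ j, |((b.repr w j : ℚ):ℝ)|) * (2*(ε:ℝ)) := by rw [← Finset.sum_mul]
      _ ≤ ((M:ℝ)) * (2*(ε:ℝ)) := by
          apply mul_le_mul_of_nonneg_right ?_ (by positivity)
          have := hMmem w hw
          have hcast : ((∑ j, |b.repr w j| : ℚ) : ℝ) = ∑ j, |((b.repr w j : ℚ):ℝ)| := by
            push_cast; rfl
          calc ∑ j, |((b.repr w j : ℚ):ℝ)| = ((∑ j, |b.repr w j| : ℚ) : ℝ) := hcast.symm
            _ ≤ (M:ℝ) := by exact_mod_cast this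
      _ ≤ δ := by nlinarith [hε0]


/-- Partition lemma: for a finite `I ⊆ ℝ` and `δ > 0` there are
`a₁, …, a_k ∈ (0,1]` and `ℚ`-linear maps `f₁, …, f_k : Span_ℚ(I ∪ {1}) → ℚ`
fixing `ℚ`, with `∑ aᵢ fᵢ = id` and `|fᵢ(a) - a| ≤ δ` for all `a ∈ I`. -/
theorem stmt_4 (I : Set ℝ) (hI : I.Finite) (δ : ℝ) (hδ : 0 < δ) :
    ∃ (k : ℕ) (a : Fin k → ℝ)
      (f : Fin k → ((Submodule.span ℚ (I ∪ {1} : Set ℝ)) →ₗ[ℚ] ℚ)),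
      0 < k ∧
      (∀ i, 0 < a i ∧ a i ≤ 1) ∧
      (∀ i (q : ℚ) (hq : (q : ℝ) ∈ Submodule.span ℚ (I ∪ {1} : Set ℝ)),
        f i ⟨(q : ℝ), hq⟩ = q) ∧
      (∀ x : Submodule.span ℚ (I ∪ {1} : Set ℝ),
        ∑ i, a i * ((f i x : ℚ) : ℝ) = (x : ℝ)) ∧
      (∀ i (b : ℝ) (hb : b ∈ I),
        |((f i ⟨b, Submodule.subset_span (Or.inl hb)⟩ : ℚ) : ℝ) - b| ≤ δ) := by
  classical
  set V : Submodule ℚ ℝ := Submodule.span ℚ (I ∪ {1} : Set ℝ) with hV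
  have h1 : (1:ℝ) ∈ V := Submodule.subset_span (Or.inr rfl)
  set one : V := ⟨1, h1⟩ with hone'
  have hone : one ≠ 0 := by
    intro h
    have := congrArg (Subtype.val) h
    simp [hone'] at this
  haveI : FiniteDimensional ℚ V := by
    apply FiniteDimensional.span_of_finite
    exact hI.union (Set.finite_singleton 1)
  set L : Submodule ℚ V := (ℚ ∙ one) with hL
  obtain ⟨Wc, hW⟩ := Submodule.exists_isCompl L
  set π : V →ₗ[ℚ] Wc := Wc.projectionOnto L hW.symm with hπ
  set pL : V →ₗ[ℚ] L := L.projectionOnto Wc hW with hpL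
  set φ : V →ₗ[ℚ] ℚ := (LinearEquiv.coord ℚ V one hone).toLinearMap ∘ₗ pL with hφ
  have h1L : one ∈ L := Submodule.mem_span_singleton_self one
  -- decomposition
  have hdecomp : ∀ x : V, x = φ x • one + (π x : V) := by
    intro x
    have h : (pL x : V) + (π x : V) = x := Submodule.projection_add_projection_eq_self hW x
    have h2 : ((pL x : V)) = φ x • one := by
      have := LinearEquiv.coord_apply_smul ℚ V one hone (pL x)
      simp only [hφ, LinearMap.coe_comp, Function.comp_apply, LinearEquiv.coe_coe]
      exact this.symm
    apply Subtype.ext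
    have := congrArg Subtype.val h
    rw [← this]
    push_cast [h2]
    ring
  have hπone : π one = 0 := Submodule.projectionOnto_apply_of_mem_right hW.symm h1L
  have hφone : φ one = 1 := by
    have hpl : pL one = ⟨one, h1L⟩ := by
      have := Submodule.projectionOnto_apply_left hW (⟨one, h1L⟩ : L)
      simpa using this
    simp only [hφ, LinearMap.coe_comp, Function.comp_apply, LinearEquiv.coe_coe, hpl]
    exact LinearEquiv.coord_self ℚ V one hone
  set ι : Wc →ₗ[ℚ] ℝ := V.subtype ∘ₗ Wc.subtype with hι
  set J : Finset Wc := (hI.toFinset.attach).image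
    (fun b => π ⟨b.1, Submodule.subset_span (Or.inl (hI.mem_toFinset.mp b.2))⟩) with hJ
  obtain ⟨n, a, g, hapos, hasum, hsum, hbound⟩ := core ι J δ hδ
  set f : Fin (n+1) → (V →ₗ[ℚ] ℚ) := fun i => φ + (g i) ∘ₗ π with hf
  have hfx : ∀ i (x : V), f i x = φ x + g i (π x) := by intro i x; simp [hf]
  have hxreal : ∀ x : V, (x:ℝ) = (φ x : ℝ) + ι (π x) := by
    intro x
    conv_lhs => rw [hdecomp x]
    push_cast
    simp [hone', Rat.smul_def, hι]
  refine ⟨n+1, a, f, Nat.succ_pos n, hapos, ?_, ?_, ?_⟩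
  · intro i q hq
    have hx : (⟨(q:ℝ), hq⟩ : V) = q • one := by
      apply Subtype.ext
      push_cast
      simp [hone', Rat.smul_def]
    rw [hx, map_smul, smul_eq_mul, hfx, hπone, map_zero, hφone]
    ring
  · intro x
    have : ∀ i, a i * ((f i x : ℚ):ℝ) = a i * (φ x:ℝ) + a i * ((g i (π x) : ℚ):ℝ) := by
      intro i; rw [hfx]; push_cast; ring
    rw [Finset.sum_congr rfl (fun i _ => this i), Finset.sum_add_distrib,
      ← Finset.sum_mul, hasum, hsum, one_mul, hxreal x]
  · intro i b hb
    set x : V := ⟨b, Submodule.subset_span (Or.inl hb)⟩ with hx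
    have hmem : π x ∈ J := by
      rw [hJ]
      apply Finset.mem_image.mpr
      exact ⟨⟨b, hI.mem_toFinset.mpr hb⟩, Finset.mem_attach _ _, rfl⟩
    have := hbound i (π x) hmem
    have hb' : (b:ℝ) = (φ x : ℝ) + ι (π x) := hxreal x
    rw [hfx]
    push_cast
    calc |((φ x:ℝ) + ((g i (π x) : ℚ):ℝ)) - b| = |((g i (π x) : ℚ):ℝ) - ι (π x)| := by
          rw [hb']; ring_nf
      _ ≤ δ := this
end

section
/- Let $I \subset [0, +\infty)$ be a set of real numbers satisfying the descending chain condition (DCC). Then the set $\Sigma(I) := \{ \sum_{i=1}^{\ell} f_i \mid \ell \in \mathbb{Z}_{\ge 0},\ f_1, \ldots, f_{\ell} \in I \}$ of all finite sums of elements of $I$ (including the empty sum $0$) also satisfies the DCC. -/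
/-- If `I ⊆ [0,∞)` satisfies the DCC (no strictly decreasing infinite sequence),
then the set of all finite sums of elements of `I` also satisfies the DCC. -/
theorem stmt_7 (I : Set ℝ) (hI : I ⊆ Set.Ici (0 : ℝ))
    (hdcc : ¬∃ g : ℕ → ℝ, (∀ n, g n ∈ I) ∧ StrictAnti g) :
    ¬∃ g : ℕ → ℝ,
      (∀ n, g n ∈ {x : ℝ | ∃ (ℓ : ℕ) (f : Fin ℓ → ℝ), (∀ i, f i ∈ I) ∧ x = ∑ i, f i}) ∧
      StrictAnti g := by
  have hwf : I.IsWF := by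
    rw [Set.isWF_iff_no_descending_seq]
    intro f hf hmem
    exact hdcc ⟨f, fun n => hmem n, hf⟩
  have hclos : (AddSubmonoid.closure I : Set ℝ).IsWF := by
    rw [← Set.isPWO_iff_isWF] at hwf ⊢
    exact hwf.addSubmonoid_closure (fun x hx => hI hx)
  rintro ⟨g, hg, hanti⟩
  rw [Set.isWF_iff_no_descending_seq] at hclos
  refine hclos g hanti fun n => ?_
  obtain ⟨ℓ, f, hf, hx⟩ := hg n
  exact hx ▸ sum_mem (fun i _ => AddSubmonoid.subset_closure (hf i))
end

section
/- Let $f \colon X \to Y$ be a function between topological spaces' underlying sets where $X$ is a Noetherian topological space, and let $m \colon X \to \mathbb{R} \cup \{-\infty\}$ be a function with the following property: for every irreducible closed subset $Z \subseteq X$ with generic behavior, there exist a nonempty open subset $U \subseteq X$ meeting $Z$ and a constant $c_Z$ such that $m(x) = c_Z$ for all $x \in Z \cap U$. Then $m$ takes only finitely many values and every fiber of $m$ is a constructible subset of $X$. -/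
open TopologicalSpace

/-- A set is "constructible": finite union of locally closed sets (as a finite set family). -/
def MyCon {X : Type*} [TopologicalSpace X] (A : Set X) : Prop :=
  ∃ S : Set (Set X), S.Finite ∧ (∀ s ∈ S, IsLocallyClosed s) ∧ A = ⋃₀ S

lemma myCon_empty {X : Type*} [TopologicalSpace X] : MyCon (∅ : Set X) :=
  ⟨∅, Set.finite_empty, by simp, by simp⟩

lemma myCon_of_locallyClosed {X : Type*} [TopologicalSpace X] {A : Set X}
    (hA : IsLocallyClosed A) : MyCon A :=
  ⟨{A}, Set.finite_singleton _, by simpa, by simp⟩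

lemma myCon_union {X : Type*} [TopologicalSpace X] {A B : Set X}
    (hA : MyCon A) (hB : MyCon B) : MyCon (A ∪ B) := by
  obtain ⟨S, hSf, hSlc, rfl⟩ := hA
  obtain ⟨T, hTf, hTlc, rfl⟩ := hB
  exact ⟨S ∪ T, hSf.union hTf, fun s hs => hs.elim (hSlc s) (hTlc s),
    (Set.sUnion_union S T).symm⟩

lemma myCon_fin {X : Type*} [TopologicalSpace X] {A : Set X} (hA : MyCon A) :
    ∃ (n : ℕ) (s : Fin n → Set X), (∀ i, IsLocallyClosed (s i)) ∧ A = ⋃ i, s i := by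
  obtain ⟨S, hSf, hSlc, rfl⟩ := hA
  haveI := hSf.fintype
  refine ⟨Fintype.card S, fun i => ((Fintype.equivFin S).symm i : Set X),
    fun i => hSlc _ ((Fintype.equivFin S).symm i).2, ?_⟩
  rw [Set.sUnion_eq_iUnion]
  exact ((Fintype.equivFin S).symm.iSup_comp (g := fun (i : S) => (i : Set X))).symm

/-- Noetherian induction for the mld function: if a function
`m : X → ℝ ∪ {-∞}` on a Noetherian topological space is generically constant on
every irreducible closed subset, then `m` takes finitely many values and every
fiber of `m` is constructible (a finite union of locally closed subsets). -/
theorem stmt_17 (X Y : Type*) [TopologicalSpace X]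
    [TopologicalSpace.NoetherianSpace X] (f : X → Y) (m : X → WithBot ℝ)
    (h : ∀ Z : Set X, IsClosed Z → IsIrreducible Z →
      ∃ (U : Set X) (c : WithBot ℝ), IsOpen U ∧ (Z ∩ U).Nonempty ∧
        ∀ x ∈ Z ∩ U, m x = c) :
    (Set.range m).Finite ∧
    ∀ c : WithBot ℝ, ∃ (n : ℕ) (s : Fin n → Set X),
      (∀ i, IsLocallyClosed (s i)) ∧ m ⁻¹' {c} = ⋃ i, s i := by
  have key : ∀ Z : Closeds X,
      (m '' (Z : Set X)).Finite ∧ ∀ c, MyCon ((Z : Set X) ∩ m ⁻¹' {c}) := by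
    intro Z
    apply wellFounded_lt.induction Z
    clear Z
    intro Z IH
    rcases Set.eq_empty_or_nonempty (Z : Set X) with hZ | hne
    · rw [hZ]
      exact ⟨by simp, fun c => by simpa using myCon_empty⟩
    by_cases hirr : IsIrreducible (Z : Set X)
    · obtain ⟨U, c, hU, hZU, hconst⟩ := h Z Z.isClosed hirr
      set W : Closeds X := ⟨(Z : Set X) ∩ Uᶜ, Z.isClosed.inter hU.isClosed_compl⟩ with hW
      have hWlt : W < Z := by
        obtain ⟨x, hxZ, hxU⟩ := hZU
        refine SetLike.coe_ssubset_coe.mp ?_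
        exact (Set.ssubset_iff_of_subset Set.inter_subset_left).mpr
          ⟨x, hxZ, fun hmem => hmem.2 hxU⟩
      obtain ⟨hWfin, hWcon⟩ := IH W hWlt
      constructor
      · apply Set.Finite.subset (hWfin.insert c)
        rintro _ ⟨x, hx, rfl⟩
        by_cases hxU : x ∈ U
        · exact Or.inl (hconst x ⟨hx, hxU⟩)
        · exact Or.inr ⟨x, ⟨hx, hxU⟩, rfl⟩
      · intro c'
        have hsplit : (Z : Set X) ∩ m ⁻¹' {c'} =
            ((Z : Set X) ∩ U ∩ m ⁻¹' {c'}) ∪ ((W : Set X) ∩ m ⁻¹' {c'}) := by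
          ext x
          simp only [Set.mem_inter_iff, Set.mem_union, hW, Set.mem_compl_iff]
          constructor
          · rintro ⟨hxZ, hxm⟩
            by_cases hxU : x ∈ U
            · exact Or.inl ⟨⟨hxZ, hxU⟩, hxm⟩
            · exact Or.inr ⟨⟨hxZ, hxU⟩, hxm⟩
          · rintro (⟨⟨hxZ, _⟩, hxm⟩ | ⟨⟨hxZ, _⟩, hxm⟩) <;> exact ⟨hxZ, hxm⟩
        rw [hsplit]
        apply myCon_union _ (hWcon c')
        by_cases hcc : c' = c
        · subst hcc
          have : (Z : Set X) ∩ U ∩ m ⁻¹' {c'} = (Z : Set X) ∩ U := by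
            apply Set.inter_eq_left.mpr
            intro x hx
            exact hconst x hx
          rw [this]
          exact myCon_of_locallyClosed (Z.isClosed.isLocallyClosed.inter hU.isLocallyClosed)
        · have : (Z : Set X) ∩ U ∩ m ⁻¹' {c'} = ∅ := by
            ext x
            simp only [Set.mem_inter_iff, Set.mem_preimage, Set.mem_singleton_iff,
              Set.mem_empty_iff_false, iff_false]
            rintro ⟨hxZU, hxm⟩
            exact hcc (hxm.symm.trans (hconst x hxZU))
          rw [this]; exact myCon_empty
    · -- reducible nonempty case
      rw [IsIrreducible, not_and_or] at hirr
      rcases hirr with hirr | hpre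
      · exact absurd hne hirr
      rw [IsPreirreducible] at hpre
      push_neg at hpre
      obtain ⟨U, V, hU, hV, hZU, hZV, hUV⟩ := hpre
      set Z1 : Closeds X := ⟨(Z : Set X) ∩ Uᶜ, Z.isClosed.inter hU.isClosed_compl⟩
      set Z2 : Closeds X := ⟨(Z : Set X) ∩ Vᶜ, Z.isClosed.inter hV.isClosed_compl⟩
      have hcover : (Z : Set X) = (Z1 : Set X) ∪ (Z2 : Set X) := by
        apply Set.eq_of_subset_of_subset
        · intro x hx
          by_cases hxU : x ∈ U
          · exact Or.inr ⟨hx, fun hxV =>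
              Set.eq_empty_iff_forall_notMem.mp hUV x ⟨hx, hxU, hxV⟩⟩
          · exact Or.inl ⟨hx, hxU⟩
        · rintro x (hx | hx)
          exacts [hx.1, hx.1]
      have hlt1 : Z1 < Z := by
        obtain ⟨x, hxZ, hxU⟩ := hZU
        exact SetLike.coe_ssubset_coe.mp
          ((Set.ssubset_iff_of_subset Set.inter_subset_left).mpr
            ⟨x, hxZ, fun hmem => hmem.2 hxU⟩)
      have hlt2 : Z2 < Z := by
        obtain ⟨x, hxZ, hxV⟩ := hZV
        exact SetLike.coe_ssubset_coe.mp
          ((Set.ssubset_iff_of_subset Set.inter_subset_left).mpr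
            ⟨x, hxZ, fun hmem => hmem.2 hxV⟩)
      obtain ⟨h1f, h1c⟩ := IH Z1 hlt1
      obtain ⟨h2f, h2c⟩ := IH Z2 hlt2
      constructor
      · rw [hcover, Set.image_union]; exact h1f.union h2f
      · intro c
        rw [hcover, Set.union_inter_distrib_right]
        exact myCon_union (h1c c) (h2c c)
  obtain ⟨hfin, hcon⟩ := key ⊤
  constructor
  · have : Set.range m = m '' ((⊤ : Closeds X) : Set X) := by simp [Set.image_univ]
    rw [this]; exact hfin
  · intro c
    have := hcon c
    simp only [Closeds.coe_top, Set.univ_inter] at this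
    exact myCon_fin this
end
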